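/- Let α : ℕ → ℝ satisfy 0 ≤ α(t) < 1 for all t and ∑_{t=0}^{∞} α(t) = ∞, and let w : ℕ → ℝ satisfy w(t) → 0 as t → ∞. Define W : ℕ → ℝ by an arbitrary W(0) and the recursion W(t+1) = (1 - α(t))·W(t) + α(t)·w(t). Then W(t) → 0 as t → ∞. -/

import Mathlib

/-- Convergence of the noise-accumulation recursion of the proof of Theorem 1:
if `0 ≤ α(t) < 1` for all `t`, `∑ α(t) = ∞`, `w(t) → 0`, and
`W(t+1) = (1 - α(t))·W(t) + α(t)·w(t)`, then `W(t) → 0`. -/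
theorem noise_recursion_tendsto_zero
    (α w W : ℕ → ℝ)
    (hα : ∀ t, 0 ≤ α t ∧ α t < 1)
    (hsum : Filter.Tendsto (fun n => ∑ t ∈ Finset.range n, α t)
      Filter.atTop Filter.atTop)
    (hw : Filter.Tendsto w Filter.atTop (nhds 0))
    (hWrec : ∀ t, W (t + 1) = (1 - α t) * W t + α t * w t) :
    Filter.Tendsto W Filter.atTop (nhds 0) := by
  rw [Metric.tendsto_atTop]
  intro ε hε
  obtain ⟨T, hT⟩ := (Metric.tendsto_atTop.mp hw) (ε/3) (by positivity)
  simp only [Real.dist_eq, sub_zero] at hT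
  have hP0 : ∀ t, 0 ≤ ∏ s ∈ Finset.Ico T t, (1 - α s) := by
    intro t
    exact Finset.prod_nonneg fun s _ => by linarith [(hα s).2]
  -- key bound for t = T + k
  have key : ∀ k, |W (T + k)| ≤ ε/3 + (∏ s ∈ Finset.Ico T (T + k), (1 - α s)) * |W T| := by
    intro k
    induction k with
    | zero => simp; positivity
    | succ n ih =>
      have hs := hα (T + n)
      have h1 : 0 ≤ 1 - α (T + n) := by linarith [hs.2]
      have hrec := hWrec (T + n)
      have habs : |W (T + n + 1)| ≤ (1 - α (T + n)) * |W (T + n)| + α (T + n) * |w (T + n)| := by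
        rw [hrec]
        calc |(1 - α (T + n)) * W (T + n) + α (T + n) * w (T + n)|
            ≤ |(1 - α (T + n)) * W (T + n)| + |α (T + n) * w (T + n)| := abs_add_le _ _
          _ = (1 - α (T + n)) * |W (T + n)| + α (T + n) * |w (T + n)| := by
              rw [abs_mul, abs_mul, abs_of_nonneg h1, abs_of_nonneg hs.1]
      have hwn : |w (T + n)| ≤ ε/3 := le_of_lt (hT (T + n) (Nat.le_add_right _ _))
      have hprod : ∏ s ∈ Finset.Ico T (T + n + 1), (1 - α s)
          = (∏ s ∈ Finset.Ico T (T + n), (1 - α s)) * (1 - α (T + n)) := by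
        rw [Finset.prod_Ico_succ_top (Nat.le_add_right T n)]
      have h2 : (1 - α (T + n)) * |W (T + n)|
          ≤ (1 - α (T + n)) * (ε/3 + (∏ s ∈ Finset.Ico T (T + n), (1 - α s)) * |W T|) :=
        mul_le_mul_of_nonneg_left ih h1
      have h3 : α (T + n) * |w (T + n)| ≤ α (T + n) * (ε/3) :=
        mul_le_mul_of_nonneg_left hwn hs.1
      calc |W (T + n + 1)| ≤ (1 - α (T + n)) * |W (T + n)| + α (T + n) * |w (T + n)| := habs
        _ ≤ (1 - α (T + n)) * (ε/3 + (∏ s ∈ Finset.Ico T (T + n), (1 - α s)) * |W T|)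
            + α (T + n) * (ε/3) := add_le_add h2 h3
        _ = ε/3 + (∏ s ∈ Finset.Ico T (T + n + 1), (1 - α s)) * |W T| := by
            rw [hprod]; ring
  -- product tends to 0
  have hPle : ∀ t, (∏ s ∈ Finset.Ico T t, (1 - α s))
      ≤ Real.exp (-(∑ s ∈ Finset.Ico T t, α s)) := by
    intro t
    calc ∏ s ∈ Finset.Ico T t, (1 - α s)
        ≤ ∏ s ∈ Finset.Ico T t, Real.exp (-α s) := by
          apply Finset.prod_le_prod
          · exact fun s _ => by linarith [(hα s).2]
          · intro s _
            have := Real.add_one_le_exp (-α s)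
            linarith
      _ = Real.exp (∑ s ∈ Finset.Ico T t, -α s) := by
          rw [Real.exp_sum]
      _ = Real.exp (-(∑ s ∈ Finset.Ico T t, α s)) := by rw [Finset.sum_neg_distrib]
  have hsumIco : Filter.Tendsto (fun t => ∑ s ∈ Finset.Ico T t, α s)
      Filter.atTop Filter.atTop := by
    have heq : ∀ᶠ t in Filter.atTop, ∑ s ∈ Finset.Ico T t, α s
        = (∑ s ∈ Finset.range t, α s) - ∑ s ∈ Finset.range T, α s := by
      filter_upwards [Filter.eventually_ge_atTop T] with t ht
      rw [Finset.sum_Ico_eq_sub _ ht]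
    exact Filter.Tendsto.congr' (heq.mono fun t h => h.symm) (hsum.atTop_add tendsto_const_nhds)
  have hPtend : Filter.Tendsto (fun t => ∏ s ∈ Finset.Ico T t, (1 - α s))
      Filter.atTop (nhds 0) := by
    apply squeeze_zero hP0 hPle
    exact Real.tendsto_exp_atBot.comp (Filter.tendsto_neg_atBot_iff.mpr hsumIco)
  have hPW : Filter.Tendsto (fun t => (∏ s ∈ Finset.Ico T t, (1 - α s)) * |W T|)
      Filter.atTop (nhds 0) := by
    simpa using hPtend.mul_const |W T|
  obtain ⟨K, hK⟩ := (Metric.tendsto_atTop.mp hPW) (ε/3) (by positivity)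
  refine ⟨max T K, fun n hn => ?_⟩
  have hnT : T ≤ n := le_trans (le_max_left _ _) hn
  have hnK : K ≤ n := le_trans (le_max_right _ _) hn
  obtain ⟨k, rfl⟩ := Nat.exists_eq_add_of_le hnT
  have h1 := key k
  have h2 := hK (T + k) hnK
  rw [Real.dist_eq, sub_zero] at h2 ⊢
  have h3 : (∏ s ∈ Finset.Ico T (T + k), (1 - α s)) * |W T| < ε/3 :=
    lt_of_abs_lt h2
  calc |W (T + k)| ≤ ε/3 + (∏ s ∈ Finset.Ico T (T + k), (1 - α s)) * |W T| := h1
    _ < ε/3 + ε/3 := by linarith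
    _ < ε := by linarith
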